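/- For every x ∈ X, the commutator of F and the projection Π^x satisfies ‖[F, Π^x]‖ ≤ 2^{−n/2}·√(2·Γ_x). -/

import Mathlib

open scoped Matrix Kronecker

noncomputable section

/-- The ℓ²→ℓ² operator norm of a square complex matrix. -/
def opNorm {I : Type*} [Fintype I] [DecidableEq I] (A : Matrix I I ℂ) : ℝ :=
  ‖Matrix.toEuclideanCLM (𝕜 := ℂ) A‖

/-- The commutator [A,B] = AB - BA. -/
def commM {I : Type*} [Fintype I] (A B : Matrix I I ℂ) : Matrix I I ℂ := A * B - B * A

/-- Euclidean norm of a vector in ℂ^I. -/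
def vnorm {I : Type*} [Fintype I] (v : I → ℂ) : ℝ := Real.sqrt (∑ i, ‖v i‖ ^ 2)

/-- Y = {0,1}^n. -/
abbrev Yb (n : ℕ) := Fin n → Bool
/-- Ȳ = Y ∪ {⊥}. -/
abbrev Ybar (n : ℕ) := Option (Yb n)

/-- standard basis vector |a⟩. -/
def ket {n : ℕ} (a : Ybar n) : Ybar n → ℂ := fun b => if b = a then 1 else 0

/-- (-1)^{η⋅y}. -/
def signDot {n : ℕ} (η y : Yb n) : ℂ := (-1 : ℂ) ^ (Finset.univ.filter fun i => η i && y i).card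

/-- 2^{-n/2}. -/
def cst (n : ℕ) : ℝ := (2 : ℝ) ^ (-(n : ℝ) / 2)

/-- |φ_η⟩ = 2^{-n/2} ∑_y (-1)^{η⋅y} |y⟩. -/
def phi {n : ℕ} (η : Yb n) : Ybar n → ℂ :=
  fun a => Option.casesOn a 0 fun y => (cst n : ℂ) * signDot η y

/-- |φ_0⟩. -/
def phi0 (n : ℕ) : Ybar n → ℂ := phi fun _ => false

/-- The Walsh–Hadamard transform on ℂ^Y, extended by the identity on |⊥⟩. -/
def Hbar (n : ℕ) : Matrix (Ybar n) (Ybar n) ℂ :=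
  Matrix.of fun a b =>
    match a, b with
    | none, none => 1
    | some y, some y' => (cst n : ℂ) * signDot y y'
    | _, _ => 0

/-- The involution exchanging ⊥ and 0^n. -/
def swapBot (n : ℕ) : Ybar n → Ybar n :=
  fun a =>
    Option.casesOn a (some fun _ => false) fun y =>
      if y = (fun _ => false) then none else some y

/-- The permutation matrix exchanging |⊥⟩ and |0^n⟩. -/
def Sswap (n : ℕ) : Matrix (Ybar n) (Ybar n) ℂ :=
  Matrix.of fun a b => if a = swapBot n b then 1 else 0

/-- F = H̄ ⬝ S ⬝ H̄. -/
def Fmat (n : ℕ) : Matrix (Ybar n) (Ybar n) ℂ := Hbar n * Sswap n * Hbar n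

/-- Γ_x = |{y : (x,y) ∈ R}|. -/
def Gam {n : ℕ} {X : Type*} [Fintype X] (R : X → Yb n → Prop) [∀ x, DecidablePred (R x)]
    (x : X) : ℕ :=
  (Finset.univ.filter fun y => R x y).card

/-- Γ_R = max_x Γ_x. -/
def GamR {n : ℕ} {X : Type*} [Fintype X] (R : X → Yb n → Prop) [∀ x, DecidablePred (R x)] : ℕ :=
  Finset.univ.sup fun x => Gam R x

/-- whether an entry a ∈ Ȳ satisfies the relation at x (⊥ never does). -/
def hitB {n : ℕ} {X : Type*} (R : X → Yb n → Prop) [∀ x, DecidablePred (R x)] (x : X) :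
    Ybar n → Bool :=
  fun a => Option.casesOn a false fun y => decide (R x y)

/-- The projection Π^x = ∑_{y : (x,y)∈R} |y⟩⟨y| on ℂ^Ȳ. -/
def Pix {n : ℕ} {X : Type*} (R : X → Yb n → Prop) [∀ x, DecidablePred (R x)] (x : X) :
    Matrix (Ybar n) (Ybar n) ℂ :=
  Matrix.diagonal fun a => if hitB R x a then 1 else 0

/-- bitwise xor. -/
def xorY {n : ℕ} (y y' : Yb n) : Yb n := fun i => xor (y i) (y' i)

/-- CNOT on Y × Ȳ (control Ȳ, target Y), acting trivially on |y⟩⊗|⊥⟩. -/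
def cnotFun (n : ℕ) : Yb n × Ybar n → Yb n × Ybar n :=
  fun p => Option.casesOn p.2 p fun y' => (xorY p.1 y', p.2)

def CNOTmat (n : ℕ) : Matrix (Yb n × Ybar n) (Yb n × Ybar n) ℂ :=
  Matrix.of fun a b => if a = cnotFun n b then 1 else 0

/-- O^x = (1⊗F)·CNOT·(1⊗F) on ℂ^{Y×Ȳ}. -/
def Oxsmall (n : ℕ) : Matrix (Yb n × Ybar n) (Yb n × Ybar n) ℂ :=
  ((1 : Matrix (Yb n) (Yb n) ℂ) ⊗ₖ Fmat n) * CNOTmat n *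
    ((1 : Matrix (Yb n) (Yb n) ℂ) ⊗ₖ Fmat n)

/-- The database index set D̄ = X → Ȳ. -/
abbrev Db (n : ℕ) (X : Type*) := X → Ybar n

/-- An operator A on ℂ^Ȳ acting on the x-coordinate of ℂ^{D̄}. -/
def onCoord {n : ℕ} {X : Type*} [Fintype X] [DecidableEq X] (x : X)
    (A : Matrix (Ybar n) (Ybar n) ℂ) : Matrix (Db n X) (Db n X) ℂ :=
  Matrix.of fun d d' => if ∀ x', x' ≠ x → d x' = d' x' then A (d x) (d' x) else 0

/-- Π^x_{D_x} : diagonal projection on ℂ^{D̄} onto databases with (x, d x) ∈ R. -/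
def PiDx {n : ℕ} {X : Type*} [Fintype X] [DecidableEq X]
    (R : X → Yb n → Prop) [∀ x, DecidablePred (R x)] (x : X) :
    Matrix (Db n X) (Db n X) ℂ :=
  Matrix.diagonal fun d => if hitB R x (d x) then 1 else 0

/-- Π^∅_D : diagonal projection on ℂ^{D̄} onto databases hitting R nowhere. -/
def PiEmptyD {n : ℕ} {X : Type*} [Fintype X] [DecidableEq X]
    (R : X → Yb n → Prop) [∀ x, DecidablePred (R x)] :
    Matrix (Db n X) (Db n X) ℂ :=
  Matrix.diagonal fun d => if ∀ x, hitB R x (d x) = false then 1 else 0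

/-- CNOT_{YD_x}. -/
def cnotDFun {n : ℕ} {X : Type*} (x : X) : Yb n × Db n X → Yb n × Db n X :=
  fun p => Option.casesOn (p.2 x) p fun yx => (xorY p.1 yx, p.2)

def CNOTD {n : ℕ} {X : Type*} [Fintype X] [DecidableEq X] (x : X) :
    Matrix (Yb n × Db n X) (Yb n × Db n X) ℂ :=
  Matrix.of fun a b => if a = cnotDFun x b then 1 else 0

/-- F_{D_x}. -/
def FDx (n : ℕ) {X : Type*} [Fintype X] [DecidableEq X] (x : X) :
    Matrix (Db n X) (Db n X) ℂ :=
  onCoord x (Fmat n)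

/-- O^x_{YD_x} = F_{D_x}·CNOT_{YD_x}·F_{D_x} on ℂ^{Y×D̄}. -/
def OxD (n : ℕ) {X : Type*} [Fintype X] [DecidableEq X] (x : X) :
    Matrix (Yb n × Db n X) (Yb n × Db n X) ℂ :=
  ((1 : Matrix (Yb n) (Yb n) ℂ) ⊗ₖ FDx n x) * CNOTD x *
    ((1 : Matrix (Yb n) (Yb n) ℂ) ⊗ₖ FDx n x)

/-- O_{XYD} = ∑_x |x⟩⟨x| ⊗ O^x_{YD_x} on ℂ^{X×Y×D̄}. -/
def OXYD (n : ℕ) (X : Type*) [Fintype X] [DecidableEq X] :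
    Matrix (X × Yb n × Db n X) (X × Yb n × Db n X) ℂ :=
  Matrix.of fun p q =>
    if p.1 = q.1 then OxD n p.1 (p.2.1, p.2.2) (q.2.1, q.2.2) else 0

/-- The pointer set P = ZMod (|X|+1). -/
abbrev Ptr (X : Type*) [Fintype X] := ZMod (Fintype.card X + 1)

/-- Encoding of X into the nonzero elements of ZMod (|X|+1). -/
def encodeX {X : Type*} [Fintype X] (x : X) : Ptr X :=
  (((Fintype.equivFin X x : ℕ) + 1 : ℕ) : Ptr X)

/-- ext(d): the smallest x ∈ X with (x, d x) ∈ R, encoded in ZMod (|X|+1); ∅ ↦ 0. -/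
def extD {n : ℕ} {X : Type*} [Fintype X] [LinearOrder X] (R : X → Yb n → Prop)
    [∀ x, DecidablePred (R x)] (d : Db n X) : Ptr X :=
  if h : (Finset.univ.filter fun x => hitB R x (d x) = true).Nonempty then
    encodeX ((Finset.univ.filter fun x => hitB R x (d x) = true).min' h)
  else 0

/-- The purified measurement M_{DP} : |d⟩⊗|w⟩ ↦ |d⟩⊗|w + ext(d)⟩ on ℂ^{D̄×P}. -/
def MDP {n : ℕ} {X : Type*} [Fintype X] [LinearOrder X] (R : X → Yb n → Prop)
    [∀ x, DecidablePred (R x)] :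
    Matrix (Db n X × Ptr X) (Db n X × Ptr X) ℂ :=
  Matrix.of fun p q => if p = (q.1, q.2 + extD R q.1) then 1 else 0

/-- O^x_{YD_x} ⊗ 1_P on ℂ^{Y×D̄×P}. -/
def OxDP (n : ℕ) {X : Type*} [Fintype X] [DecidableEq X] (x : X) :
    Matrix (Yb n × Db n X × Ptr X) (Yb n × Db n X × Ptr X) ℂ :=
  Matrix.of fun p q =>
    if p.2.2 = q.2.2 then OxD n x (p.1, p.2.1) (q.1, q.2.1) else 0

/-- 1_Y ⊗ M_{DP} on ℂ^{Y×D̄×P}. -/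
def MYDP {n : ℕ} {X : Type*} [Fintype X] [LinearOrder X] (R : X → Yb n → Prop)
    [∀ x, DecidablePred (R x)] :
    Matrix (Yb n × Db n X × Ptr X) (Yb n × Db n X × Ptr X) ℂ :=
  Matrix.of fun p q =>
    if p.1 = q.1 then MDP R (p.2.1, p.2.2) (q.2.1, q.2.2) else 0

/-- O_{XYD} ⊗ 1_P on ℂ^{X×Y×D̄×P}. -/
def OXYDP (n : ℕ) (X : Type*) [Fintype X] [DecidableEq X] :
    Matrix (X × Yb n × Db n X × Ptr X) (X × Yb n × Db n X × Ptr X) ℂ :=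
  Matrix.of fun p q =>
    if p.2.2.2 = q.2.2.2 then
      OXYD n X (p.1, p.2.1, p.2.2.1) (q.1, q.2.1, q.2.2.1)
    else 0

/-- 1_{X×Y} ⊗ M_{DP} on ℂ^{X×Y×D̄×P}. -/
def MXYDP {n : ℕ} {X : Type*} [Fintype X] [LinearOrder X] (R : X → Yb n → Prop)
    [∀ x, DecidablePred (R x)] :
    Matrix (X × Yb n × Db n X × Ptr X) (X × Yb n × Db n X × Ptr X) ℂ :=
  Matrix.of fun p q =>
    if p.1 = q.1 ∧ p.2.1 = q.2.1 then
      MDP R (p.2.2.1, p.2.2.2) (q.2.2.1, q.2.2.2)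
    else 0








-- helper instance (Lean struggles to find this by search)
instance instDEq4 (n : ℕ) (X : Type*) [Fintype X] [DecidableEq X] :
    DecidableEq (X × Yb n × Db n X × Ptr X) :=
  instDecidableEqProd


-- extensions to the five-register space W × X × Y × D̄ × P
/-- 1_W ⊗ O_{XYD} ⊗ 1_P on ℂ^{W×X×Y×D̄×P}. -/
def OW (n : ℕ) (W X : Type*) [Fintype X] [DecidableEq X] [DecidableEq W] :
    Matrix (W × X × Yb n × Db n X × Ptr X) (W × X × Yb n × Db n X × Ptr X) ℂ :=
  Matrix.of fun p q =>
    if p.1 = q.1 ∧ p.2.2.2.2 = q.2.2.2.2 then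
      OXYD n X (p.2.1, p.2.2.1, p.2.2.2.1) (q.2.1, q.2.2.1, q.2.2.2.1)
    else 0

/-- 1_{W×X×Y} ⊗ M_{DP} on ℂ^{W×X×Y×D̄×P}. -/
def MW {n : ℕ} (W : Type*) {X : Type*} [Fintype X] [LinearOrder X] [DecidableEq W]
    (R : X → Yb n → Prop) [∀ x, DecidablePred (R x)] :
    Matrix (W × X × Yb n × Db n X × Ptr X) (W × X × Yb n × Db n X × Ptr X) ℂ :=
  Matrix.of fun p q =>
    if p.1 = q.1 ∧ p.2.1 = q.2.1 ∧ p.2.2.1 = q.2.2.1 then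
      MDP R (p.2.2.2.1, p.2.2.2.2) (q.2.2.2.1, q.2.2.2.2)
    else 0

instance instDEq5 (n : ℕ) (W X : Type*) [Fintype X] [DecidableEq X] [DecidableEq W] :
    DecidableEq (W × X × Yb n × Db n X × Ptr X) :=
  instDecidableEqProd


/-- V ⊗ 1_{D̄×P} on ℂ^{W×X×Y×D̄×P}. -/
def Vext (n : ℕ) (W X : Type*) [Fintype X] [DecidableEq X]
    (V : Matrix (W × X × Yb n) (W × X × Yb n) ℂ) :
    Matrix (W × X × Yb n × Db n X × Ptr X) (W × X × Yb n × Db n X × Ptr X) ℂ :=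
  Matrix.of fun p q =>
    if p.2.2.2 = q.2.2.2 then V (p.1, p.2.1, p.2.2.1) (q.1, q.2.1, q.2.2.1) else 0

/-- Ψ = ψ ⊗ |⊥⃗⟩ ⊗ |0⟩. -/
def PsiInit (n : ℕ) {W X : Type*} [Fintype X] [DecidableEq X]
    (ψ : W × X × Yb n → ℂ) : W × X × Yb n × Db n X × Ptr X → ℂ :=
  fun p =>
    if p.2.2.2.1 = (fun _ => (none : Ybar n)) ∧ p.2.2.2.2 = (0 : Ptr X) then
      ψ (p.1, p.2.1, p.2.2.1)
    else 0

/-- 1_{W×X×Y×D̄} ⊗ |0⟩⟨0|_P. -/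
def ProjZeroP (n : ℕ) (W X : Type*) [Fintype X] [DecidableEq X] [DecidableEq W] :
    Matrix (W × X × Yb n × Db n X × Ptr X) (W × X × Yb n × Db n X × Ptr X) ℂ :=
  Matrix.of fun p q =>
    if p.1 = q.1 ∧ p.2.1 = q.2.1 ∧ p.2.2.1 = q.2.2.1 ∧ p.2.2.2.1 = q.2.2.2.1 ∧
        p.2.2.2.2 = (0 : Ptr X) ∧ q.2.2.2.2 = (0 : Ptr X) then 1 else 0



/-- O_{XYD} acting on registers 1, 2 and 5 of ℂ^{X×Y×X'×Y'×D̄}. -/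
def Oquery1 (n : ℕ) (X : Type*) [Fintype X] [DecidableEq X] :
    Matrix (X × Yb n × X × Yb n × Db n X) (X × Yb n × X × Yb n × Db n X) ℂ :=
  Matrix.of fun p q =>
    if p.2.2.1 = q.2.2.1 ∧ p.2.2.2.1 = q.2.2.2.1 then
      OXYD n X (p.1, p.2.1, p.2.2.2.2) (q.1, q.2.1, q.2.2.2.2)
    else 0

/-- O_{X'Y'D} acting on registers 3, 4 and 5 of ℂ^{X×Y×X'×Y'×D̄}. -/
def Oquery2 (n : ℕ) (X : Type*) [Fintype X] [DecidableEq X] :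
    Matrix (X × Yb n × X × Yb n × Db n X) (X × Yb n × X × Yb n × Db n X) ℂ :=
  Matrix.of fun p q =>
    if p.1 = q.1 ∧ p.2.1 = q.2.1 then
      OXYD n X (p.2.2.1, p.2.2.2.1, p.2.2.2.2) (q.2.2.1, q.2.2.2.1, q.2.2.2.2)
    else 0


/-- M^R_{DP} acting on registers D and P of ℂ^{D̄×P×P'}. -/
def Mext1 {n : ℕ} {X : Type*} [Fintype X] [LinearOrder X]
    (R : X → Yb n → Prop) [∀ x, DecidablePred (R x)] :
    Matrix (Db n X × Ptr X × Ptr X) (Db n X × Ptr X × Ptr X) ℂ :=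
  Matrix.of fun p q =>
    if p.2.2 = q.2.2 then MDP R (p.1, p.2.1) (q.1, q.2.1) else 0

/-- M^{R'}_{DP'} acting on registers D and P' of ℂ^{D̄×P×P'}. -/
def Mext2 {n : ℕ} {X : Type*} [Fintype X] [LinearOrder X]
    (R' : X → Yb n → Prop) [∀ x, DecidablePred (R' x)] :
    Matrix (Db n X × Ptr X × Ptr X) (Db n X × Ptr X × Ptr X) ℂ :=
  Matrix.of fun p q =>
    if p.2.1 = q.2.1 then MDP R' (p.1, p.2.2) (q.1, q.2.2) else 0



-- ===== auxiliary lemmas for stmt7 =====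
section Stmt7Aux

def zeroY (n : ℕ) : Yb n := fun _ => false

lemma signDot_eq_prod {n : ℕ} (η y : Yb n) :
    signDot η y = ∏ i, (if η i && y i then (-1 : ℂ) else 1) := by
  rw [signDot, Finset.prod_ite, Finset.prod_const, Finset.prod_const, one_pow, mul_one]

lemma signDot_zero_left {n : ℕ} (y : Yb n) : signDot (zeroY n) y = 1 := by
  simp [signDot_eq_prod, zeroY]

lemma signDot_zero_right {n : ℕ} (y : Yb n) : signDot y (zeroY n) = 1 := by
  simp [signDot_eq_prod, zeroY]

lemma charSum {n : ℕ} (η y : Yb n) :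
    ∑ z : Yb n, signDot η z * signDot z y = if η = y then ((2 : ℂ) ^ n) else 0 := by
  have h : ∀ z : Yb n, signDot η z * signDot z y =
      ∏ i, ((if η i && z i then (-1:ℂ) else 1) * (if z i && y i then (-1:ℂ) else 1)) := fun z => by
    rw [signDot_eq_prod, signDot_eq_prod, Finset.prod_mul_distrib]
  simp only [h]
  rw [← Fintype.piFinset_univ, ← Finset.prod_univ_sum (fun _ => (Finset.univ : Finset Bool))
    (fun i b => (if (η i && b) = true then (-1:ℂ) else 1) * if (b && y i) = true then -1 else 1)]
  have h2 : ∀ i, (∑ b : Bool, (if η i && b then (-1:ℂ) else 1) * (if b && y i then (-1:ℂ) else 1))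
      = if η i = y i then 2 else 0 := fun i => by
    cases hη : η i <;> cases hy : y i <;> simp [Fintype.sum_bool] <;> norm_num
  rw [Finset.prod_congr rfl fun i _ => h2 i]
  by_cases hxy : η = y
  · subst hxy; simp
  · rw [if_neg hxy]
    obtain ⟨i, hi⟩ := Function.ne_iff.mp hxy
    exact Finset.prod_eq_zero (Finset.mem_univ i) (if_neg hi)

lemma cst_nonneg (n : ℕ) : 0 ≤ cst n := Real.rpow_nonneg (by norm_num) _

lemma cst_sq (n : ℕ) : cst n ^ 2 * 2 ^ n = 1 := by
  have h2 : (0:ℝ) < 2 := by norm_num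
  rw [cst, ← Real.rpow_natCast ((2:ℝ) ^ (-(n:ℝ)/2)) 2, ← Real.rpow_mul h2.le,
    ← Real.rpow_natCast (2:ℝ) n, ← Real.rpow_add h2]
  norm_num

lemma cst_sqC (n : ℕ) : ((cst n : ℂ)) ^ 2 * 2 ^ n = 1 := by
  have h := cst_sq n
  calc ((cst n : ℂ)) ^ 2 * 2 ^ n = ((cst n ^ 2 * 2 ^ n : ℝ) : ℂ) := by push_cast; ring
    _ = 1 := by rw [h]; norm_num

/-- the vector u = φ₀ - |⊥⟩. -/
def uuv (n : ℕ) : Ybar n → ℂ := fun a => Option.casesOn a (-1) fun _ => ((cst n : ℝ) : ℂ)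

@[simp] lemma Hbar_nn {n : ℕ} : Hbar n none none = 1 := rfl
@[simp] lemma Hbar_ns {n : ℕ} (y : Yb n) : Hbar n none (some y) = 0 := rfl
@[simp] lemma Hbar_sn {n : ℕ} (y : Yb n) : Hbar n (some y) none = 0 := rfl
@[simp] lemma Hbar_ss {n : ℕ} (y y' : Yb n) :
    Hbar n (some y) (some y') = ((cst n : ℝ) : ℂ) * signDot y y' := rfl

@[simp] lemma swapBot_none {n : ℕ} : swapBot n none = some (zeroY n) := rfl
@[simp] lemma swapBot_some {n : ℕ} (y : Yb n) :
    swapBot n (some y) = if y = zeroY n then none else some y := rfl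

lemma Hbar_mul_Sswap {n : ℕ} (a d : Ybar n) :
    (Hbar n * Sswap n) a d = Hbar n a (swapBot n d) := by
  rw [Matrix.mul_apply]
  simp only [Sswap, Matrix.of_apply, mul_ite, mul_one, mul_zero]
  rw [Finset.sum_ite_eq' Finset.univ (swapBot n d) (fun c => Hbar n a c)]
  simp

lemma Fmat_apply {n : ℕ} (a b : Ybar n) :
    Fmat n a b = (if a = b then 1 else 0) - uuv n a * uuv n b := by
  have key : Fmat n a b = ∑ d, Hbar n a (swapBot n d) * Hbar n d b := by
    rw [Fmat, Matrix.mul_apply]; simp only [Hbar_mul_Sswap]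
  rw [key, univ_option, Finset.sum_insertNone]
  rcases a with _ | y <;> rcases b with _ | y''
  · simp [uuv]
  · simp only [swapBot_none, swapBot_some, Hbar_ns, Hbar_nn, Hbar_ss, zero_mul,
      apply_ite (Hbar n none), ite_mul, one_mul, zero_add, uuv]
    rw [Finset.sum_ite_eq' Finset.univ (zeroY n) (fun y' => ((cst n : ℝ) : ℂ) * signDot y' y'')]
    simp [signDot_zero_left]
  · simp [signDot_zero_right, uuv]
  · have hterm : ∀ y' : Yb n,
        (if y' = zeroY n then (0:ℂ) * (((cst n : ℝ):ℂ) * signDot y' y'')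
            else ((cst n : ℝ):ℂ) * signDot y y' * (((cst n : ℝ):ℂ) * signDot y' y''))
        = ((cst n : ℝ):ℂ)^2 * (signDot y y' * signDot y' y'')
          - (if y' = zeroY n then ((cst n : ℝ):ℂ)^2 * (signDot y y' * signDot y' y'') else 0) := by
      intro y'; by_cases h : y' = zeroY n <;> simp [h] <;> ring
    simp only [swapBot_none, swapBot_some, Hbar_ss, Hbar_ns, Hbar_sn, mul_zero, zero_add,
      apply_ite (Hbar n (some y)), ite_mul]
    rw [Finset.sum_congr rfl fun y' _ => hterm y', Finset.sum_sub_distrib, ← Finset.mul_sum,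
      charSum, Finset.sum_ite_eq' Finset.univ (zeroY n)
        (fun y' => ((cst n : ℝ):ℂ)^2 * (signDot y y' * signDot y' y''))]
    simp only [Finset.mem_univ, if_true, signDot_zero_left, signDot_zero_right, mul_one, uuv]
    by_cases hyy : y = y''
    · subst hyy
      simp only [if_pos rfl]
      rw [show ((cst n : ℝ):ℂ) * ((cst n : ℝ):ℂ) = ((cst n : ℝ):ℂ)^2 from (pow_two _).symm]
      simp [cst_sqC n]
    · simp [hyy, sq]

end Stmt7Aux

section Stmt7Aux2

lemma comm_eq {n : ℕ} {X : Type*} (R : X → Yb n → Prop) [∀ x, DecidablePred (R x)] (x : X)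
    (vr wr : Ybar n → ℝ)
    (hv : ∀ a, (vr a : ℂ) = (if hitB R x a then (1:ℂ) else 0) * uuv n a)
    (hw : ∀ a, (wr a : ℂ) = (1 - (if hitB R x a then (1:ℂ) else 0)) * uuv n a) :
    commM (Fmat n) (Pix R x) = Matrix.of fun a b => ((vr a * wr b - wr a * vr b : ℝ) : ℂ) := by
  ext a b
  rw [Matrix.of_apply, commM, Matrix.sub_apply, Pix, Matrix.mul_diagonal, Matrix.diagonal_mul,
    Fmat_apply]
  push_cast
  rw [hv a, hv b, hw a, hw b]
  by_cases hab : a = b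
  · subst hab; ring
  · rw [if_neg hab]; ring

set_option maxHeartbeats 1000000 in
open Finset in
lemma opNorm_skew_le {I : Type*} [Fintype I] [DecidableEq I]
    (v w : I → ℝ) (hdisj : ∀ a, v a = 0 ∨ w a = 0) :
    opNorm (Matrix.of fun a b => ((v a * w b - w a * v b : ℝ) : ℂ)) ≤
      Real.sqrt (∑ a, v a ^ 2) * Real.sqrt (∑ a, w a ^ 2) := by
  set A : Matrix I I ℂ := Matrix.of fun a b => ((v a * w b - w a * v b : ℝ) : ℂ) with hA
  have hV : (0:ℝ) ≤ Real.sqrt (∑ a, v a ^ 2) := Real.sqrt_nonneg _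
  have hW : (0:ℝ) ≤ Real.sqrt (∑ a, w a ^ 2) := Real.sqrt_nonneg _
  rw [opNorm]
  refine ContinuousLinearMap.opNorm_le_bound _ (mul_nonneg hV hW) fun x => ?_
  set Sv : ℂ := ∑ b, (v b : ℂ) * x b with hSv
  set Sw : ℂ := ∑ b, (w b : ℂ) * x b with hSw
  have hyx : ∀ a, (Matrix.toEuclideanCLM (𝕜 := ℂ) A x) a = (v a : ℂ) * Sw - (w a : ℂ) * Sv := by
    intro a
    have h0 := congrFun (Matrix.ofLp_toEuclideanCLM (𝕜 := ℂ) A x) a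
    have h1 : (Matrix.toEuclideanCLM (𝕜 := ℂ) A x) a = ∑ b, A a b * x b := by
      simpa [Matrix.toLin'_apply, Matrix.mulVec, dotProduct] using h0
    have h2 : ∀ b, A a b * x b = (v a:ℂ) * ((w b:ℂ) * x b) - (w a:ℂ) * ((v b:ℂ) * x b) := by
      intro b; simp only [hA, Matrix.of_apply]; push_cast; ring
    rw [h1, Finset.sum_congr rfl fun b _ => h2 b, Finset.sum_sub_distrib,
      ← Finset.mul_sum, ← Finset.mul_sum, hSv, hSw]
  have hnorm2 : ‖Matrix.toEuclideanCLM (𝕜 := ℂ) A x‖^2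
      = (∑ a, v a ^2) * ‖Sw‖^2 + (∑ a, w a ^2) * ‖Sv‖^2 := by
    rw [EuclideanSpace.norm_eq, Real.sq_sqrt (by positivity)]
    have h3 : ∀ a, ‖(Matrix.toEuclideanCLM (𝕜 := ℂ) A x) a‖^2
        = v a^2 * ‖Sw‖^2 + w a^2 * ‖Sv‖^2 := by
      intro a
      rw [hyx a]
      rcases hdisj a with h | h
      · rw [h]
        push_cast
        rw [zero_mul, zero_sub, norm_neg, norm_mul, mul_pow, Complex.norm_real,
          Real.norm_eq_abs, sq_abs]
        ring
      · rw [h]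
        push_cast
        rw [zero_mul, sub_zero, norm_mul, mul_pow, Complex.norm_real,
          Real.norm_eq_abs, sq_abs]
        ring
    rw [Finset.sum_congr rfl fun a _ => h3 a, Finset.sum_add_distrib,
      ← Finset.sum_mul, ← Finset.sum_mul]
  have CSbound : ∀ (u : I → ℝ) (T : Finset I),
      (∀ a, a ∉ T → (u a : ℂ) * x a = 0) →
      ‖∑ b, (u b : ℂ) * x b‖^2 ≤ (∑ a, u a^2) * (∑ a ∈ T, ‖x a‖^2) := by
    intro u T hT
    have h1 : ∑ b, (u b : ℂ) * x b = ∑ b ∈ T, (u b : ℂ) * x b :=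
      (Finset.sum_subset T.subset_univ (fun a _ ha => hT a ha)).symm
    have h2 : ‖∑ b ∈ T, (u b : ℂ) * x b‖ ≤ ∑ b ∈ T, |u b| * ‖x b‖ := by
      refine (norm_sum_le _ _).trans (Finset.sum_le_sum fun b _ => ?_)
      rw [norm_mul, Complex.norm_real, Real.norm_eq_abs]
    have h3 : (∑ b ∈ T, |u b| * ‖x b‖)^2 ≤ (∑ b ∈ T, |u b|^2) * (∑ b ∈ T, ‖x b‖^2) :=
      Finset.sum_mul_sq_le_sq_mul_sq T _ _
    have h4 : (∑ b ∈ T, |u b|^2) ≤ ∑ a, u a^2 := by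
      refine (Finset.sum_le_sum_of_subset_of_nonneg T.subset_univ
        (fun a _ _ => sq_nonneg (u a))).trans_eq' ?_
      exact Finset.sum_congr rfl fun b _ => by rw [sq_abs]
    calc ‖∑ b, (u b : ℂ) * x b‖^2 = ‖∑ b ∈ T, (u b : ℂ) * x b‖^2 := by rw [h1]
      _ ≤ (∑ b ∈ T, |u b| * ‖x b‖)^2 := by
          apply pow_le_pow_left₀ (norm_nonneg _) h2
      _ ≤ (∑ b ∈ T, |u b|^2) * (∑ b ∈ T, ‖x b‖^2) := h3
      _ ≤ (∑ a, u a^2) * (∑ b ∈ T, ‖x b‖^2) := by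
          apply mul_le_mul_of_nonneg_right h4 (by positivity)
  set T : Finset I := Finset.univ.filter (fun a => ¬ v a = 0) with hT
  have hSvB : ‖Sv‖^2 ≤ (∑ a, v a^2) * (∑ a ∈ T, ‖x a‖^2) := by
    refine CSbound v T fun a ha => ?_
    have : v a = 0 := by
      by_contra hne
      exact ha (Finset.mem_filter.mpr ⟨Finset.mem_univ a, hne⟩)
    rw [this]; push_cast; ring
  have hSwB : ‖Sw‖^2 ≤ (∑ a, w a^2) * (∑ a ∈ Tᶜ, ‖x a‖^2) := by
    refine CSbound w Tᶜ fun a ha => ?_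
    have hvT : a ∈ T := by simpa using ha
    have hvne : ¬ v a = 0 := (Finset.mem_filter.mp hvT).2
    have : w a = 0 := (hdisj a).resolve_left hvne
    rw [this]; push_cast; ring
  have hxsplit : (∑ a ∈ T, ‖x a‖^2) + (∑ a ∈ Tᶜ, ‖x a‖^2) = ‖x‖^2 := by
    rw [EuclideanSpace.norm_eq, Real.sq_sqrt (by positivity)]
    exact Finset.sum_add_sum_compl T _
  have hv2 : (0:ℝ) ≤ ∑ a, v a^2 := by positivity
  have hw2 : (0:ℝ) ≤ ∑ a, w a^2 := by positivity
  have hfin : ‖Matrix.toEuclideanCLM (𝕜 := ℂ) A x‖^2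
      ≤ (Real.sqrt (∑ a, v a ^ 2) * Real.sqrt (∑ a, w a ^ 2) * ‖x‖)^2 := by
    have hrhs : (Real.sqrt (∑ a, v a ^ 2) * Real.sqrt (∑ a, w a ^ 2) * ‖x‖)^2
        = (∑ a, v a ^ 2) * (∑ a, w a ^ 2) * ‖x‖^2 := by
      rw [mul_pow, mul_pow, Real.sq_sqrt hv2, Real.sq_sqrt hw2]
    rw [hrhs, hnorm2, ← hxsplit]
    have hT1 : (0:ℝ) ≤ ∑ a ∈ T, ‖x a‖^2 := by positivity
    have hT2 : (0:ℝ) ≤ ∑ a ∈ Tᶜ, ‖x a‖^2 := by positivity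
    nlinarith [mul_le_mul_of_nonneg_left hSwB hv2, mul_le_mul_of_nonneg_left hSvB hw2]
  have := Real.sqrt_le_sqrt hfin
  rwa [Real.sqrt_sq (norm_nonneg _), Real.sqrt_sq (by positivity)] at this

end Stmt7Aux2


-- STATEMENT 7
theorem stmt7 (n : ℕ) {X : Type*} [Fintype X] [Nonempty X]
    (R : X → Yb n → Prop) [∀ x, DecidablePred (R x)] (x : X) :
    opNorm (commM (Fmat n) (Pix R x)) ≤
      (2 : ℝ) ^ (-(n : ℝ) / 2) * Real.sqrt (2 * (Gam R x : ℝ)) := by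
  classical
  set vr : Ybar n → ℝ := fun a => if hitB R x a then cst n else 0 with hvr
  set wr : Ybar n → ℝ :=
    fun a => Option.casesOn a (-1 : ℝ) (fun y => if hitB R x (some y) then 0 else cst n) with hwr
  have hv : ∀ a, (vr a : ℂ) = (if hitB R x a then (1:ℂ) else 0) * uuv n a := by
    intro a
    rcases a with _ | y
    · simp [hvr, hitB, uuv]
    · by_cases h : R x y <;> simp [hvr, hitB, h, uuv]
  have hw : ∀ a, (wr a : ℂ) = (1 - (if hitB R x a then (1:ℂ) else 0)) * uuv n a := by
    intro a
    rcases a with _ | y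
    · simp [hwr, hitB, uuv]
    · by_cases h : R x y <;> simp [hwr, hitB, h, uuv]
  have hdisj : ∀ a, vr a = 0 ∨ wr a = 0 := by
    intro a
    rcases a with _ | y
    · left; simp [hvr, hitB]
    · by_cases h : R x y
      · right; simp [hwr, hitB, h]
      · left; simp [hvr, hitB, h]
  rw [comm_eq R x vr wr hv hw]
  refine (opNorm_skew_le vr wr hdisj).trans ?_
  have hV2 : ∑ a, vr a ^ 2 = cst n ^ 2 * (Gam R x : ℝ) := by
    rw [univ_option, Finset.sum_insertNone]
    have h0 : vr none ^ 2 = 0 := by simp [hvr, hitB]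
    have h1 : ∀ y : Yb n, vr (some y) ^ 2 = if R x y then cst n ^ 2 else 0 := by
      intro y; by_cases h : R x y <;> simp [hvr, hitB, h]
    rw [h0, zero_add, Finset.sum_congr rfl fun y _ => h1 y, ← Finset.sum_filter,
      Finset.sum_const, Gam, nsmul_eq_mul]
    ring
  have hcard : (Finset.univ : Finset (Yb n)).card = 2 ^ n := by
    simp [Fintype.card_fun]
  have hW2 : ∑ a, wr a ^ 2 ≤ 2 := by
    rw [univ_option, Finset.sum_insertNone]
    have h0 : wr none ^ 2 = 1 := by simp [hwr]
    have h1 : ∀ y : Yb n, wr (some y) ^ 2 ≤ cst n ^ 2 := by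
      intro y; by_cases h : R x y
      · simp only [hwr]; simp [hitB, h]; positivity
      · simp [hwr, hitB, h]
    have h2 : ∑ y : Yb n, wr (some y) ^ 2 ≤ 1 := by
      calc ∑ y : Yb n, wr (some y) ^ 2 ≤ ∑ _y : Yb n, cst n ^ 2 :=
            Finset.sum_le_sum fun y _ => h1 y
        _ = ((2 ^ n : ℕ) : ℝ) * cst n ^ 2 := by rw [Finset.sum_const, hcard, nsmul_eq_mul]
        _ = 1 := by push_cast; rw [mul_comm]; exact cst_sq n
    rw [h0]; linarith
  have hVeq : Real.sqrt (∑ a, vr a ^ 2) = cst n * Real.sqrt (Gam R x : ℝ) := by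
    rw [hV2, Real.sqrt_mul (sq_nonneg _), Real.sqrt_sq (cst_nonneg n)]
  have hWle : Real.sqrt (∑ a, wr a ^ 2) ≤ Real.sqrt 2 := Real.sqrt_le_sqrt hW2
  calc Real.sqrt (∑ a, vr a ^ 2) * Real.sqrt (∑ a, wr a ^ 2)
      ≤ (cst n * Real.sqrt (Gam R x : ℝ)) * Real.sqrt 2 := by
        rw [hVeq]
        exact mul_le_mul_of_nonneg_left hWle (mul_nonneg (cst_nonneg n) (Real.sqrt_nonneg _))
    _ = (2 : ℝ) ^ (-(n : ℝ) / 2) * Real.sqrt (2 * (Gam R x : ℝ)) := by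
        rw [Real.sqrt_mul (by norm_num : (0:ℝ) ≤ 2), cst]; ring

end
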